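/- The restriction of the operator J to the 6-dimensional subspace V spanned by w_0∧w_1, w_0∧w_2, w_1∧w_2, w_0∧w_1∧w_2∧w̄_0, w_0∧w_1∧w_2∧w̄_1, w_0∧w_1∧w_2∧w̄_2 equals multiplication by −2i, and hence has trace −12i; in particular J does not lie in the Lie algebra generated by the operators L_j, Λ_j, V_j, A_j (since every element of that Lie algebra restricts to V with trace zero). -/

import Mathlib

/-- Index set for the orthonormal basis `v_{ij}`, `i ∈ {1,2}`, `j ∈ {0,1,2}`:
`(0, j)` stands for `v_{1j}` and `(1, j)` for `v_{2j}`. -/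
abbrev Idx := Fin 2 × Fin 3

/-- A linear order key on the index set. -/
def key (a : Idx) : ℕ := a.1.val * 3 + a.2.val

noncomputable section

/-- Concrete model of the complexified exterior algebra `Λ*W ⊗ ℂ` of the
6-dimensional real inner product space `W` with orthonormal basis `v_{ij}`:
complex-valued functions on subsets of the index set, with the induced
Hermitian inner product (the wedge monomials in the `v_{ij}` are orthonormal). -/
abbrev EWc := EuclideanSpace ℂ (Finset Idx)

/-- The sign `(-1)^{#{b ∈ S | b < a}}`. -/
def sgnc (a : Idx) (S : Finset Idx) : ℂ :=
  (-1 : ℂ) ^ (S.filter (fun b => key b < key a)).card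

/-- `Eop a` is the wedge (exterior multiplication) operator with `v_a`. -/
def Eop (a : Idx) : Module.End ℂ EWc where
  toFun f := WithLp.toLp 2 (fun (S : Finset Idx) => if a ∈ S then sgnc a (S.erase a) * f (S.erase a) else 0)
  map_add' f g := by
    ext S
    by_cases h : a ∈ S <;> simp [h, mul_add]
  map_smul' c f := by
    ext S
    by_cases h : a ∈ S <;> simp [h] <;> ring

/-- `Iop a` is the contraction operator with the vector dual to `v_a`. -/
def Iop (a : Idx) : Module.End ℂ EWc where
  toFun f := WithLp.toLp 2 (fun (S : Finset Idx) => if a ∈ S then 0 else sgnc a S * f (insert a S))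
  map_add' f g := by
    ext S
    by_cases h : a ∈ S <;> simp [h, mul_add]
  map_smul' c f := by
    ext S
    by_cases h : a ∈ S <;> simp [h] <;> ring

/-- `J = Σ_j (E_{2j}I_{1j} - E_{1j}I_{2j})`: the (complexification of the)
derivation of `Λ*W` with `J(v_{1j}) = v_{2j}` and `J(v_{2j}) = -v_{1j}`. -/
def Jop : Module.End ℂ EWc :=
  ∑ j : Fin 3, (Eop (1, j) ∘ₗ Iop (0, j) - Eop (0, j) ∘ₗ Iop (1, j))

/-- The vacuum (the unit `1 ∈ Λ⁰`). -/
def vac : EWc := WithLp.toLp 2 (fun S => if S = ∅ then 1 else 0)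

/-- Wedge operator with `w_j = v_{1j} + i v_{2j}`. -/
def Ew (j : Fin 3) : Module.End ℂ EWc := Eop (0, j) + Complex.I • Eop (1, j)

/-- Wedge operator with `w̄_j = v_{1j} - i v_{2j}`. -/
def Ewb (j : Fin 3) : Module.End ℂ EWc := Eop (0, j) - Complex.I • Eop (1, j)

/-- Contraction operator `I_{w_j} = I_{1j} - i I_{2j}`. -/
def Iw (j : Fin 3) : Module.End ℂ EWc := Iop (0, j) - Complex.I • Iop (1, j)

/-- Contraction operator `I_{w̄_j} = I_{1j} + i I_{2j}`. -/
def Iwb (j : Fin 3) : Module.End ℂ EWc := Iop (0, j) + Complex.I • Iop (1, j)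

/-- The element `w_j = v_{1j} + i v_{2j}` of `Λ¹`. -/
def wv (j : Fin 3) : EWc := Ew j vac

/-- The element `w̄_j = v_{1j} - i v_{2j}` of `Λ¹`. -/
def wbv (j : Fin 3) : EWc := Ewb j vac

/-- `L_0, L_1, L_2`: wedge with `ω_D = v_{11}∧v_{12} + v_{21}∧v_{22}`,
`-ω_2 = -(v_{10}∧v_{12} + v_{20}∧v_{22})`, `ω_1 = v_{10}∧v_{11} + v_{20}∧v_{21}`. -/
def Lop : Fin 3 → Module.End ℂ EWc
  | 0 => Eop (0, 1) ∘ₗ Eop (0, 2) + Eop (1, 1) ∘ₗ Eop (1, 2)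
  | 1 => -(Eop (0, 0) ∘ₗ Eop (0, 2) + Eop (1, 0) ∘ₗ Eop (1, 2))
  | 2 => Eop (0, 0) ∘ₗ Eop (0, 1) + Eop (1, 0) ∘ₗ Eop (1, 1)

/-- `V_j`: wedge with the volume form `v_{1j} ∧ v_{2j}`. -/
def Vop (j : Fin 3) : Module.End ℂ EWc := Eop (0, j) ∘ₗ Eop (1, j)

/-- `Λ_j = L_j*`, Hermitian adjoint. -/
def Λop (j : Fin 3) : Module.End ℂ EWc := LinearMap.adjoint (Lop j)

/-- `A_j = V_j*`, Hermitian adjoint. -/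
def Aop (j : Fin 3) : Module.End ℂ EWc := LinearMap.adjoint (Vop j)

/-- `H_j = [L_j, Λ_j]`. -/
def Hop (j : Fin 3) : Module.End ℂ EWc := ⁅Lop j, Λop j⁆

/-- The six spanning elements `w_0∧w_1, w_0∧w_2, w_1∧w_2,
`w_0∧w_1∧w_2∧w̄_0, w_0∧w_1∧w_2∧w̄_1, w_0∧w_1∧w_2∧w̄_2`. -/
def vvGen : Fin 6 → EWc
  | 0 => Ew 0 (Ew 1 vac)
  | 1 => Ew 0 (Ew 2 vac)
  | 2 => Ew 1 (Ew 2 vac)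
  | 3 => Ew 0 (Ew 1 (Ew 2 (Ewb 0 vac)))
  | 4 => Ew 0 (Ew 1 (Ew 2 (Ewb 1 vac)))
  | 5 => Ew 0 (Ew 1 (Ew 2 (Ewb 2 vac)))

/-- The 6-dimensional subspace `V` of `Λ*W ⊗ ℂ`. -/
def VV : Submodule ℂ EWc := Submodule.span ℂ (Set.range vvGen)

/-- The twelve canonical operators `L_j, Λ_j, V_j, A_j` (`j = 0, 1, 2`). -/
def allOps : Set (Module.End ℂ EWc) :=
  {Lop 0, Lop 1, Lop 2, Λop 0, Λop 1, Λop 2, Vop 0, Vop 1, Vop 2, Aop 0, Aop 1, Aop 2}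

attribute [local instance 100] LieRing.ofAssociativeRing

namespace JAux

open scoped ComplexInnerProductSpace

abbrev G := GaussianInt
abbrev EW' := Finset Idx → G

def sg (a : Idx) (S : Finset Idx) : G := (-1) ^ (S.filter (fun b => key b < key a)).card
def E' (a : Idx) (f : EW') : EW' := fun S => if a ∈ S then sg a (S.erase a) * f (S.erase a) else 0
def I' (a : Idx) (f : EW') : EW' := fun S => if a ∈ S then 0 else sg a S * f (insert a S)
def gi : G := ⟨0, 1⟩
def vac' : EW' := fun S => if S = ∅ then 1 else 0
def Ew' (j : Fin 3) (f : EW') : EW' := fun S => E' (0,j) f S + gi * E' (1,j) f S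
def Ewb' (j : Fin 3) (f : EW') : EW' := fun S => E' (0,j) f S - gi * E' (1,j) f S

def g' : Fin 6 → EW'
  | 0 => Ew' 0 (Ew' 1 vac')
  | 1 => Ew' 0 (Ew' 2 vac')
  | 2 => Ew' 1 (Ew' 2 vac')
  | 3 => Ew' 0 (Ew' 1 (Ew' 2 (Ewb' 0 vac')))
  | 4 => Ew' 0 (Ew' 1 (Ew' 2 (Ewb' 1 vac')))
  | 5 => Ew' 0 (Ew' 1 (Ew' 2 (Ewb' 2 vac')))

def J' (f : EW') : EW' :=
  fun S => ∑ j : Fin 3, (E' (1,j) (I' (0,j) f) S - E' (0,j) (I' (1,j) f) S)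
def scl (c : G) (f : EW') : EW' := fun S => c * f S
def ip' (f g : EW') : G := ∑ S : Finset Idx, star (f S) * g S

def Lm : Fin 3 → EW' → EW'
  | 0, f => fun S => E' (0,1) (E' (0,2) f) S + E' (1,1) (E' (1,2) f) S
  | 1, f => fun S => -(E' (0,0) (E' (0,2) f) S + E' (1,0) (E' (1,2) f) S)
  | 2, f => fun S => E' (0,0) (E' (0,1) f) S + E' (1,0) (E' (1,1) f) S

def Λm : Fin 3 → EW' → EW'
  | 0, f => fun S => I' (0,2) (I' (0,1) f) S + I' (1,2) (I' (1,1) f) S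
  | 1, f => fun S => -(I' (0,2) (I' (0,0) f) S + I' (1,2) (I' (1,0) f) S)
  | 2, f => fun S => I' (0,1) (I' (0,0) f) S + I' (1,1) (I' (1,0) f) S

def Vm (j : Fin 3) (f : EW') : EW' := fun S => E' (0,j) (E' (1,j) f) S
def Am (j : Fin 3) (f : EW') : EW' := fun S => I' (1,j) (I' (0,j) f) S

/-- Transfer map to the complex model. -/
def toC (f : EW') : EWc := WithLp.toLp 2 (fun S => GaussianInt.toComplex (f S))

lemma toC_apply (f : EW') (S : Finset Idx) : toC f S = GaussianInt.toComplex (f S) := rfl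

lemma toC_sg (a : Idx) (S : Finset Idx) : GaussianInt.toComplex (sg a S) = sgnc a S := by
  simp [sg, sgnc, map_pow]

lemma toC_E (a : Idx) (f : EW') : toC (E' a f) = Eop a (toC f) := by
  ext S
  simp only [toC, E', Eop, LinearMap.coe_mk, AddHom.coe_mk, PiLp.toLp_apply]
  split
  · rw [map_mul, toC_sg]
  · exact map_zero _

lemma toC_I (a : Idx) (f : EW') : toC (I' a f) = Iop a (toC f) := by
  ext S
  simp only [toC, I', Iop, LinearMap.coe_mk, AddHom.coe_mk, PiLp.toLp_apply]
  split
  · exact map_zero _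
  · rw [map_mul, toC_sg]

lemma toC_add (f g : EW') : toC (fun S => f S + g S) = toC f + toC g := by
  ext S
  simp [toC, PiLp.add_apply]

lemma toC_sub (f g : EW') : toC (fun S => f S - g S) = toC f - toC g := by
  ext S
  simp [toC, PiLp.sub_apply]

lemma toC_neg (f : EW') : toC (fun S => -(f S)) = -(toC f) := by
  ext S
  simp [toC, PiLp.neg_apply]

lemma toC_gi (f : EW') : toC (fun S => gi * f S) = Complex.I • toC f := by
  ext S
  simp only [toC, PiLp.smul_apply, PiLp.toLp_apply, gi, GaussianInt.toComplex_def, smul_eq_mul]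
  push_cast
  ring_nf
  simp [Complex.I_sq]
  ring

lemma toC_scl (c : G) (f : EW') : toC (scl c f) = GaussianInt.toComplex c • toC f := by
  ext S
  simp [toC, scl, PiLp.smul_apply, smul_eq_mul]

lemma toC_vac : toC vac' = vac := by
  ext S
  simp only [toC, vac', vac, PiLp.toLp_apply]
  split <;> simp

lemma toC_Ew (j : Fin 3) (f : EW') : toC (Ew' j f) = Ew j (toC f) := by
  have : toC (Ew' j f) = toC (E' (0,j) f) + Complex.I • toC (E' (1,j) f) := by
    rw [← toC_gi, ← toC_add]; rfl
  rw [this, toC_E, toC_E]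
  simp [Ew, LinearMap.add_apply, LinearMap.smul_apply]

lemma toC_Ewb (j : Fin 3) (f : EW') : toC (Ewb' j f) = Ewb j (toC f) := by
  have : toC (Ewb' j f) = toC (E' (0,j) f) - Complex.I • toC (E' (1,j) f) := by
    rw [← toC_gi, ← toC_sub]; rfl
  rw [this, toC_E, toC_E]
  simp [Ewb, LinearMap.sub_apply, LinearMap.smul_apply]

set_option maxHeartbeats 2000000 in
lemma toC_g : ∀ k : Fin 6, toC (g' k) = vvGen k
  | 0 => by rw [show g' 0 = Ew' 0 (Ew' 1 vac') from rfl, toC_Ew, toC_Ew, toC_vac]; rfl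
  | 1 => by rw [show g' 1 = Ew' 0 (Ew' 2 vac') from rfl, toC_Ew, toC_Ew, toC_vac]; rfl
  | 2 => by rw [show g' 2 = Ew' 1 (Ew' 2 vac') from rfl, toC_Ew, toC_Ew, toC_vac]; rfl
  | 3 => by
      rw [show g' 3 = Ew' 0 (Ew' 1 (Ew' 2 (Ewb' 0 vac'))) from rfl, toC_Ew, toC_Ew, toC_Ew,
        toC_Ewb, toC_vac]; rfl
  | 4 => by
      rw [show g' 4 = Ew' 0 (Ew' 1 (Ew' 2 (Ewb' 1 vac'))) from rfl, toC_Ew, toC_Ew, toC_Ew,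
        toC_Ewb, toC_vac]; rfl
  | 5 => by
      rw [show g' 5 = Ew' 0 (Ew' 1 (Ew' 2 (Ewb' 2 vac'))) from rfl, toC_Ew, toC_Ew, toC_Ew,
        toC_Ewb, toC_vac]; rfl

lemma toC_J (f : EW') : toC (J' f) = Jop (toC f) := by
  have h0 : J' f = fun S =>
      (E' (1,0) (I' (0,0) f) S - E' (0,0) (I' (1,0) f) S) +
      (E' (1,1) (I' (0,1) f) S - E' (0,1) (I' (1,1) f) S) +
      (E' (1,2) (I' (0,2) f) S - E' (0,2) (I' (1,2) f) S) := by
    funext S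
    simp [J', Fin.sum_univ_three]
    ring
  rw [h0]
  simp only [toC_add, toC_sub, toC_E, toC_I, Jop, Fin.sum_univ_three, LinearMap.add_apply,
    LinearMap.sub_apply, LinearMap.comp_apply]


lemma toC_Lm : ∀ (j : Fin 3) (f : EW'), toC (Lm j f) = Lop j (toC f)
  | 0, f => by
    rw [show Lm 0 f = fun S => E' (0,1) (E' (0,2) f) S + E' (1,1) (E' (1,2) f) S from rfl]
    simp only [toC_add, toC_E]
    show _ = Lop 0 _
    simp only [Lop, LinearMap.add_apply, LinearMap.comp_apply]
  | 1, f => by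
    rw [show Lm 1 f = fun S => -(E' (0,0) (E' (0,2) f) S + E' (1,0) (E' (1,2) f) S) from rfl]
    simp only [toC_neg, toC_add, toC_E]
    show _ = Lop 1 _
    simp only [Lop, LinearMap.neg_apply, LinearMap.add_apply, LinearMap.comp_apply]
  | 2, f => by
    rw [show Lm 2 f = fun S => E' (0,0) (E' (0,1) f) S + E' (1,0) (E' (1,1) f) S from rfl]
    simp only [toC_add, toC_E]
    show _ = Lop 2 _
    simp only [Lop, LinearMap.add_apply, LinearMap.comp_apply]

lemma toC_Vm (j : Fin 3) (f : EW') : toC (Vm j f) = Vop j (toC f) := by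
  rw [show Vm j f = E' (0,j) (E' (1,j) f) from rfl, toC_E, toC_E]
  simp only [Vop, LinearMap.comp_apply]

lemma conj_sgnc (a : Idx) (S : Finset Idx) : (starRingEnd ℂ) (sgnc a S) = sgnc a S := by
  simp [sgnc]

lemma adjoint_Eop (a : Idx) : LinearMap.adjoint (Eop a) = Iop a := by
  refine ((LinearMap.eq_adjoint_iff (Iop a) (Eop a)).2 fun x y => ?_).symm
  simp only [PiLp.inner_apply, RCLike.inner_apply', Iop, Eop, LinearMap.coe_mk, AddHom.coe_mk,
    PiLp.toLp_apply]
  rw [← Finset.sum_filter_add_sum_filter_not Finset.univ (fun S => a ∈ S)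
      (fun S => (starRingEnd ℂ) (if a ∈ S then 0 else sgnc a S * x (insert a S)) * y S),
    ← Finset.sum_filter_add_sum_filter_not Finset.univ (fun S => a ∈ S)
      (fun S => (starRingEnd ℂ) (x S) * if a ∈ S then sgnc a (S.erase a) * y (S.erase a) else 0)]
  have h1 : ∑ S ∈ Finset.univ.filter (fun S => a ∈ S),
      (starRingEnd ℂ) (if a ∈ S then 0 else sgnc a S * x (insert a S)) * y S = 0 :=
    Finset.sum_eq_zero fun S hS => by
      simp [(Finset.mem_filter.1 hS).2]
  have h2 : ∑ S ∈ Finset.univ.filter (fun S => ¬ a ∈ S),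
      (starRingEnd ℂ) (x S) * (if a ∈ S then sgnc a (S.erase a) * y (S.erase a) else 0) = 0 :=
    Finset.sum_eq_zero fun S hS => by
      simp [(Finset.mem_filter.1 hS).2]
  rw [h1, h2, zero_add, add_zero]
  refine Finset.sum_nbij' (fun S => insert a S) (fun S => S.erase a) ?_ ?_ ?_ ?_ ?_
  · intro S hS
    simp [Finset.mem_filter]
  · intro S hS
    simp
  · intro S hS
    exact Finset.erase_insert (Finset.mem_filter.1 hS).2
  · intro S hS
    exact Finset.insert_erase (Finset.mem_filter.1 hS).2
  · intro S hS
    have ha : a ∉ S := (Finset.mem_filter.1 hS).2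
    rw [if_neg ha, if_pos (Finset.mem_insert_self a S), Finset.erase_insert ha, map_mul,
      conj_sgnc]
    ring

lemma Aop_eq (j : Fin 3) : Aop j = Iop (1,j) ∘ₗ Iop (0,j) := by
  rw [Aop, Vop, LinearMap.adjoint_comp, adjoint_Eop, adjoint_Eop]

lemma Λop_eq_0 : Λop 0 = Iop (0,2) ∘ₗ Iop (0,1) + Iop (1,2) ∘ₗ Iop (1,1) := by
  rw [Λop, show Lop 0 = Eop (0,1) ∘ₗ Eop (0,2) + Eop (1,1) ∘ₗ Eop (1,2) from rfl, map_add,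
    LinearMap.adjoint_comp, LinearMap.adjoint_comp, adjoint_Eop, adjoint_Eop, adjoint_Eop,
    adjoint_Eop]

lemma Λop_eq_1 : Λop 1 = -(Iop (0,2) ∘ₗ Iop (0,0) + Iop (1,2) ∘ₗ Iop (1,0)) := by
  rw [Λop, show Lop 1 = -(Eop (0,0) ∘ₗ Eop (0,2) + Eop (1,0) ∘ₗ Eop (1,2)) from rfl, map_neg,
    map_add, LinearMap.adjoint_comp, LinearMap.adjoint_comp, adjoint_Eop, adjoint_Eop,
    adjoint_Eop, adjoint_Eop]

lemma Λop_eq_2 : Λop 2 = Iop (0,1) ∘ₗ Iop (0,0) + Iop (1,1) ∘ₗ Iop (1,0) := by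
  rw [Λop, show Lop 2 = Eop (0,0) ∘ₗ Eop (0,1) + Eop (1,0) ∘ₗ Eop (1,1) from rfl, map_add,
    LinearMap.adjoint_comp, LinearMap.adjoint_comp, adjoint_Eop, adjoint_Eop, adjoint_Eop,
    adjoint_Eop]

lemma toC_Λm : ∀ (j : Fin 3) (f : EW'), toC (Λm j f) = Λop j (toC f)
  | 0, f => by
    rw [show Λm 0 f = fun S => I' (0,2) (I' (0,1) f) S + I' (1,2) (I' (1,1) f) S from rfl]
    simp only [toC_add, toC_I]
    show _ = Λop 0 _
    simp only [Λop_eq_0, LinearMap.add_apply, LinearMap.comp_apply]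
  | 1, f => by
    rw [show Λm 1 f = fun S => -(I' (0,2) (I' (0,0) f) S + I' (1,2) (I' (1,0) f) S) from rfl]
    simp only [toC_neg, toC_add, toC_I]
    show _ = Λop 1 _
    simp only [Λop_eq_1, LinearMap.neg_apply, LinearMap.add_apply, LinearMap.comp_apply]
  | 2, f => by
    rw [show Λm 2 f = fun S => I' (0,1) (I' (0,0) f) S + I' (1,1) (I' (1,0) f) S from rfl]
    simp only [toC_add, toC_I]
    show _ = Λop 2 _
    simp only [Λop_eq_2, LinearMap.add_apply, LinearMap.comp_apply]

lemma toC_Am (j : Fin 3) (f : EW') : toC (Am j f) = Aop j (toC f) := by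
  rw [show Am j f = I' (1,j) (I' (0,j) f) from rfl, toC_I, toC_I, Aop_eq]
  simp only [LinearMap.comp_apply]

lemma inner_toC (f g : EW') : ⟪toC f, toC g⟫ = GaussianInt.toComplex (ip' f g) := by
  simp only [PiLp.inner_apply, RCLike.inner_apply', ip', map_sum, map_mul,
    GaussianInt.toComplex_star, toC_apply]

def nrm' : Fin 6 → G := fun k => if (k : ℕ) < 3 then ⟨4, 0⟩ else ⟨16, 0⟩
def nc : Fin 6 → ℂ := fun k => if (k : ℕ) < 3 then 4 else 16

set_option maxRecDepth 100000 in
lemma gram' : ∀ k l : Fin 6, ip' (g' k) (g' l) = if k = l then nrm' k else 0 := by decide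

lemma gram (k l : Fin 6) : ⟪vvGen k, vvGen l⟫ = if k = l then nc k else 0 := by
  rw [← toC_g, ← toC_g, inner_toC, gram' k l]
  split
  · rw [nrm', nc]
    split <;> rw [GaussianInt.toComplex_def'] <;> norm_num
  · exact map_zero _

lemma nc_ne_zero (k : Fin 6) : nc k ≠ 0 := by
  rw [nc]; split <;> norm_num

lemma li : LinearIndependent ℂ vvGen := by
  rw [linearIndependent_iff']
  intro s c h i hi
  have h2 := congrArg (fun y => (inner ℂ (vvGen i) y : ℂ)) h
  simp only [inner_sum, inner_smul_right, gram, inner_zero_right] at h2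
  rw [Finset.sum_eq_single_of_mem i hi (fun b _ hb => by
    rw [if_neg (fun hh => hb hh.symm), mul_zero])] at h2
  rw [if_pos rfl] at h2
  exact (mul_eq_zero.1 h2).resolve_right (nc_ne_zero i)

def bb : Module.Basis (Fin 6) ℂ ↥VV := Module.Basis.span li

lemma bb_apply (k : Fin 6) : (bb k : EWc) = vvGen k := congrArg Subtype.val (Module.Basis.span_apply li k)

def dd : Fin 6 → ℂ := fun k => (nc k)⁻¹

lemma dd_mul_nc (k : Fin 6) : dd k * nc k = 1 := by
  rw [dd]
  exact inv_mul_cancel₀ (nc_ne_zero k)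

lemma repr_eq (k : Fin 6) (y : ↥VV) : bb.repr y k = dd k * ⟪vvGen k, (y : EWc)⟫ := by
  have hmaps : (bb.coord k) =
      dd k • ((innerSL ℂ (vvGen k)).toLinearMap.comp (VV.subtype)) := by
    refine Module.Basis.ext bb fun j => ?_
    rw [Module.Basis.coord_apply, Module.Basis.repr_self, Finsupp.single_apply, LinearMap.smul_apply,
      LinearMap.comp_apply, Submodule.coe_subtype, ContinuousLinearMap.coe_coe, innerSL_apply_apply,
      bb_apply, gram, smul_eq_mul]
    by_cases hjk : j = k
    · subst hjk
      rw [if_pos rfl, if_pos rfl, dd_mul_nc]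
    · rw [if_neg hjk, if_neg (fun h => hjk h.symm), mul_zero]
  have := congrFun (congrArg (fun (L : ↥VV →ₗ[ℂ] ℂ) => (L : ↥VV → ℂ)) hmaps) y
  simpa [Module.Basis.coord_apply] using this

/-- The "trace on V" functional. -/
def phi (T : Module.End ℂ EWc) : ℂ := ∑ k : Fin 6, dd k * ⟪vvGen k, T (vvGen k)⟫

lemma phi_trace (T : Module.End ℂ EWc) (hT : ∀ x ∈ VV, T x ∈ VV) :
    LinearMap.trace ℂ ↥VV (T.restrict hT) = phi T := by
  rw [LinearMap.trace_eq_matrix_trace ℂ bb, Matrix.trace, phi]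
  refine Finset.sum_congr rfl fun k _ => ?_
  rw [Matrix.diag_apply, LinearMap.toMatrix_apply, repr_eq]
  congr 2
  rw [LinearMap.restrict_coe_apply, bb_apply]

/-- The Lie subalgebra of operators preserving `V` with vanishing trace on `V`. -/
def good : LieSubalgebra ℂ (Module.End ℂ EWc) where
  carrier := {T | (∀ x ∈ VV, T x ∈ VV) ∧ phi T = 0}
  add_mem' := by
    rintro a b ⟨ha1, ha2⟩ ⟨hb1, hb2⟩
    refine ⟨fun x hx => ?_, ?_⟩
    · rw [LinearMap.add_apply]
      exact VV.add_mem (ha1 x hx) (hb1 x hx)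
    · have : phi (a + b) = phi a + phi b := by
        rw [phi, phi, phi, ← Finset.sum_add_distrib]
        refine Finset.sum_congr rfl fun k _ => ?_
        rw [LinearMap.add_apply, inner_add_right, mul_add]
      rw [this, ha2, hb2, add_zero]
  zero_mem' := by
    refine ⟨fun x hx => by rw [LinearMap.zero_apply]; exact VV.zero_mem, ?_⟩
    rw [phi]
    refine Finset.sum_eq_zero fun k _ => ?_
    rw [LinearMap.zero_apply, inner_zero_right, mul_zero]
  smul_mem' := by
    rintro c T ⟨h1, h2⟩
    refine ⟨fun x hx => ?_, ?_⟩
    · rw [LinearMap.smul_apply]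
      exact VV.smul_mem c (h1 x hx)
    · have : phi (c • T) = c * phi T := by
        rw [phi, phi, Finset.mul_sum]
        refine Finset.sum_congr rfl fun k _ => ?_
        rw [LinearMap.smul_apply, inner_smul_right]
        ring
      rw [this, h2, mul_zero]
  lie_mem' := by
    rintro A B ⟨hA1, hA2⟩ ⟨hB1, hB2⟩
    have hABinv : ∀ x ∈ VV, ⁅A, B⁆ x ∈ VV := fun x hx => by
      rw [Ring.lie_def, LinearMap.sub_apply, Module.End.mul_apply, Module.End.mul_apply]
      exact VV.sub_mem (hA1 _ (hB1 x hx)) (hB1 _ (hA1 x hx))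
    refine ⟨hABinv, ?_⟩
    have h1 : phi ⁅A, B⁆ = LinearMap.trace ℂ ↥VV ((⁅A, B⁆ : Module.End ℂ EWc).restrict hABinv) :=
      (phi_trace _ _).symm
    have h2 : (⁅A, B⁆ : Module.End ℂ EWc).restrict hABinv =
        ⁅A.restrict hA1, B.restrict hB1⁆ := by
      ext x
      have : ((⁅A, B⁆ : Module.End ℂ EWc).restrict hABinv x : EWc) = A (B x) - B (A x) := by
        rw [LinearMap.restrict_coe_apply, Ring.lie_def, LinearMap.sub_apply,
          Module.End.mul_apply, Module.End.mul_apply]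
      rw [this, Ring.lie_def, LinearMap.sub_apply, Module.End.mul_apply, Module.End.mul_apply]
      push_cast [LinearMap.restrict_coe_apply]
      rfl
    rw [h1, h2, LinearMap.trace_lie]

lemma mem_good (T : Module.End ℂ EWc) (c : Fin 6 → ℂ) (t : Fin 6 → Fin 6)
    (ht : ∀ k, t k ≠ k) (h : ∀ k, (2 : ℂ) • T (vvGen k) = c k • vvGen (t k)) :
    T ∈ good := by
  have him : ∀ k, T (vvGen k) = ((2 : ℂ)⁻¹ * c k) • vvGen (t k) := fun k => by
    rw [mul_smul, ← h k, smul_smul]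
    norm_num
  constructor
  · intro x hx
    refine Submodule.span_induction (p := fun x _ => T x ∈ VV) ?_ ?_ ?_ ?_ hx
    · rintro x ⟨k, rfl⟩
      show T (vvGen k) ∈ VV
      rw [him k]
      exact VV.smul_mem _ (Submodule.subset_span ⟨t k, rfl⟩)
    · show T 0 ∈ VV
      rw [map_zero]; exact VV.zero_mem
    · intro x y _ _ hx hy
      show T (x + y) ∈ VV
      rw [map_add]; exact VV.add_mem hx hy
    · intro a x _ hx
      show T (a • x) ∈ VV
      rw [map_smul]; exact VV.smul_mem a hx
  · rw [phi]
    refine Finset.sum_eq_zero fun k _ => ?_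
    rw [him k, inner_smul_right, gram, if_neg fun hh => ht k hh.symm]
    ring

lemma lift {T : Module.End ℂ EWc} {T' : EW' → EW'} (hT : ∀ f, toC (T' f) = T (toC f))
    {k l : Fin 6} {c : G} (h : scl 2 (T' (g' k)) = scl c (g' l)) :
    (2 : ℂ) • T (vvGen k) = GaussianInt.toComplex c • vvGen l := by
  have h2 := congrArg toC h
  rw [toC_scl, toC_scl, hT, toC_g, toC_g] at h2
  rw [← h2]
  congr 1
  exact (map_ofNat GaussianInt.toComplex 2).symm

def cL0 : Fin 6 → G | 0 => -1 | 1 => -1 | _ => 0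
def tL0 : Fin 6 → Fin 6 | 0 => 4 | 1 => 5 | _ => 0
def cL1 : Fin 6 → G | 0 => 1 | 2 => -1 | _ => 0
def tL1 : Fin 6 → Fin 6 | 0 => 3 | 2 => 5 | _ => 0
def cL2 : Fin 6 → G | 1 => 1 | 2 => 1 | _ => 0
def tL2 : Fin 6 → Fin 6 | 0 => 1 | 1 => 3 | 2 => 4 | _ => 0
def cA0 : Fin 6 → G | 4 => -4 | 5 => -4 | _ => 0
def tA0 : Fin 6 → Fin 6 | 0 => 1 | 4 => 0 | 5 => 1 | _ => 0
def cA1 : Fin 6 → G | 3 => 4 | 5 => -4 | _ => 0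
def tA1 : Fin 6 → Fin 6 | 0 => 1 | 5 => 2 | _ => 0
def cA2 : Fin 6 → G | 3 => 4 | 4 => 4 | _ => 0
def tA2 : Fin 6 → Fin 6 | 0 => 1 | 3 => 1 | 4 => 2 | _ => 0
def cV0 : Fin 6 → G | 2 => ⟨0, 1⟩ | _ => 0
def tV0 : Fin 6 → Fin 6 | 0 => 1 | 2 => 3 | _ => 0
def cV1 : Fin 6 → G | 1 => ⟨0, -1⟩ | _ => 0
def tV1 : Fin 6 → Fin 6 | 0 => 1 | 1 => 4 | _ => 0
def cV2 : Fin 6 → G | 0 => ⟨0, 1⟩ | _ => 0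
def tV2 : Fin 6 → Fin 6 | 0 => 5 | _ => 0
def cB0 : Fin 6 → G | 3 => ⟨0, -4⟩ | _ => 0
def tB0 : Fin 6 → Fin 6 | 0 => 1 | 3 => 2 | _ => 0
def cB1 : Fin 6 → G | 4 => ⟨0, 4⟩ | _ => 0
def tB1 : Fin 6 → Fin 6 | 0 => 1 | 4 => 1 | _ => 0
def cB2 : Fin 6 → G | 5 => ⟨0, -4⟩ | _ => 0
def tB2 : Fin 6 → Fin 6 | 0 => 1 | _ => 0

set_option maxRecDepth 100000 in
lemma decL0 : ∀ k, scl 2 (Lm 0 (g' k)) = scl (cL0 k) (g' (tL0 k)) := by decide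
set_option maxRecDepth 100000 in
lemma decL1 : ∀ k, scl 2 (Lm 1 (g' k)) = scl (cL1 k) (g' (tL1 k)) := by decide
set_option maxRecDepth 100000 in
lemma decL2 : ∀ k, scl 2 (Lm 2 (g' k)) = scl (cL2 k) (g' (tL2 k)) := by decide
set_option maxRecDepth 100000 in
lemma decA0 : ∀ k, scl 2 (Λm 0 (g' k)) = scl (cA0 k) (g' (tA0 k)) := by decide
set_option maxRecDepth 100000 in
lemma decA1 : ∀ k, scl 2 (Λm 1 (g' k)) = scl (cA1 k) (g' (tA1 k)) := by decide
set_option maxRecDepth 100000 in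
lemma decA2 : ∀ k, scl 2 (Λm 2 (g' k)) = scl (cA2 k) (g' (tA2 k)) := by decide
set_option maxRecDepth 100000 in
lemma decV0 : ∀ k, scl 2 (Vm 0 (g' k)) = scl (cV0 k) (g' (tV0 k)) := by decide
set_option maxRecDepth 100000 in
lemma decV1 : ∀ k, scl 2 (Vm 1 (g' k)) = scl (cV1 k) (g' (tV1 k)) := by decide
set_option maxRecDepth 100000 in
lemma decV2 : ∀ k, scl 2 (Vm 2 (g' k)) = scl (cV2 k) (g' (tV2 k)) := by decide
set_option maxRecDepth 100000 in
lemma decB0 : ∀ k, scl 2 (Am 0 (g' k)) = scl (cB0 k) (g' (tB0 k)) := by decide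
set_option maxRecDepth 100000 in
lemma decB1 : ∀ k, scl 2 (Am 1 (g' k)) = scl (cB1 k) (g' (tB1 k)) := by decide
set_option maxRecDepth 100000 in
lemma decB2 : ∀ k, scl 2 (Am 2 (g' k)) = scl (cB2 k) (g' (tB2 k)) := by decide
set_option maxRecDepth 100000 in
lemma decJ : ∀ k, J' (g' k) = scl ⟨0, -2⟩ (g' k) := by decide

lemma memL0 : Lop 0 ∈ good :=
  mem_good _ _ tL0 (by decide) fun k => lift (toC_Lm 0) (decL0 k)
lemma memL1 : Lop 1 ∈ good :=
  mem_good _ _ tL1 (by decide) fun k => lift (toC_Lm 1) (decL1 k)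
lemma memL2 : Lop 2 ∈ good :=
  mem_good _ _ tL2 (by decide) fun k => lift (toC_Lm 2) (decL2 k)
lemma memA0 : Λop 0 ∈ good :=
  mem_good _ _ tA0 (by decide) fun k => lift (toC_Λm 0) (decA0 k)
lemma memA1 : Λop 1 ∈ good :=
  mem_good _ _ tA1 (by decide) fun k => lift (toC_Λm 1) (decA1 k)
lemma memA2 : Λop 2 ∈ good :=
  mem_good _ _ tA2 (by decide) fun k => lift (toC_Λm 2) (decA2 k)
lemma memV0 : Vop 0 ∈ good :=
  mem_good _ _ tV0 (by decide) fun k => lift (toC_Vm 0) (decV0 k)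
lemma memV1 : Vop 1 ∈ good :=
  mem_good _ _ tV1 (by decide) fun k => lift (toC_Vm 1) (decV1 k)
lemma memV2 : Vop 2 ∈ good :=
  mem_good _ _ tV2 (by decide) fun k => lift (toC_Vm 2) (decV2 k)
lemma memB0 : Aop 0 ∈ good :=
  mem_good _ _ tB0 (by decide) fun k => lift (toC_Am 0) (decB0 k)
lemma memB1 : Aop 1 ∈ good :=
  mem_good _ _ tB1 (by decide) fun k => lift (toC_Am 1) (decB1 k)
lemma memB2 : Aop 2 ∈ good :=
  mem_good _ _ tB2 (by decide) fun k => lift (toC_Am 2) (decB2 k)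

lemma hJgen (k : Fin 6) : Jop (vvGen k) = (-(2 * Complex.I)) • vvGen k := by
  have h := congrArg toC (decJ k)
  rw [toC_scl, toC_J, toC_g] at h
  rw [h]
  congr 1
  rw [GaussianInt.toComplex_def']
  push_cast
  ring

end JAux

/-- `J` restricted to `V` equals multiplication by `-2i`, hence has trace `-12i`;
in particular `J` does not lie in the Lie algebra generated by the `L_j, Λ_j, V_j, A_j`. -/
theorem J_not_in_L :
    (∀ x ∈ VV, Jop x = (-(2 * Complex.I)) • x) ∧
    (∀ h : ∀ x ∈ VV, Jop x ∈ VV,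
      LinearMap.trace ℂ ↥VV (Jop.restrict h) = -(12 * Complex.I)) ∧
    Jop ∉ LieSubalgebra.lieSpan ℂ (Module.End ℂ EWc) allOps := by
  have part1 : ∀ x ∈ VV, Jop x = (-(2 * Complex.I)) • x := by
    intro x hx
    refine Submodule.span_induction (p := fun x _ => Jop x = (-(2 * Complex.I)) • x)
      ?_ ?_ ?_ ?_ hx
    · rintro x ⟨k, rfl⟩
      exact JAux.hJgen k
    · show Jop 0 = (-(2 * Complex.I)) • (0 : EWc)
      rw [map_zero, smul_zero]
    · intro x y _ _ hx hy
      show Jop (x + y) = _ • (x + y)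
      rw [map_add, hx, hy, smul_add]
    · intro a x _ hx
      show Jop (a • x) = _ • (a • x)
      rw [map_smul, hx, smul_comm]
  refine ⟨part1, ?_, ?_⟩
  · intro h
    have hres : Jop.restrict h = (-(2 * Complex.I)) • (LinearMap.id : Module.End ℂ ↥VV) := by
      refine LinearMap.ext fun x => Subtype.ext ?_
      rw [LinearMap.restrict_coe_apply]
      have : (((-(2 * Complex.I)) • (LinearMap.id : Module.End ℂ ↥VV)) x : EWc)
          = (-(2 * Complex.I)) • (x : EWc) := by
        rw [LinearMap.smul_apply, LinearMap.id_apply, Submodule.coe_smul]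
      rw [this]
      exact part1 _ x.2
    have hdim : Module.finrank ℂ ↥VV = 6 := by
      rw [Module.finrank_eq_card_basis JAux.bb, Fintype.card_fin]
    rw [hres, map_smul, LinearMap.trace_id, hdim]
    norm_num [smul_eq_mul]
    ring
  · intro hmem
    have hsub : LieSubalgebra.lieSpan ℂ (Module.End ℂ EWc) allOps ≤ JAux.good := by
      rw [LieSubalgebra.lieSpan_le]
      intro T hT
      simp only [allOps, Set.mem_insert_iff, Set.mem_singleton_iff] at hT
      rcases hT with h|h|h|h|h|h|h|h|h|h|h|h <;> subst h
      · exact JAux.memL0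
      · exact JAux.memL1
      · exact JAux.memL2
      · exact JAux.memA0
      · exact JAux.memA1
      · exact JAux.memA2
      · exact JAux.memV0
      · exact JAux.memV1
      · exact JAux.memV2
      · exact JAux.memB0
      · exact JAux.memB1
      · exact JAux.memB2
    have hgood : Jop ∈ JAux.good := hsub hmem
    have hphi : JAux.phi Jop = 0 := hgood.2
    have hval : JAux.phi Jop = -(12 * Complex.I) := by
      rw [JAux.phi]
      have hterm : ∀ k : Fin 6,
          JAux.dd k * (inner ℂ (vvGen k) (Jop (vvGen k)) : ℂ) = -(2 * Complex.I) := by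
        intro k
        rw [JAux.hJgen k, inner_smul_right, JAux.gram, if_pos rfl]
        have h1 : JAux.dd k * (-(2 * Complex.I) * JAux.nc k)
            = (-(2 * Complex.I)) * (JAux.dd k * JAux.nc k) := by ring
        rw [h1, JAux.dd_mul_nc, mul_one]
      rw [Finset.sum_congr rfl (fun k _ => hterm k), Finset.sum_const, Finset.card_univ,
        Fintype.card_fin]
      push_cast
      ring
    rw [hval] at hphi
    exact Complex.I_ne_zero (by linear_combination (-(1 : ℂ) / 12) * hphi)
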